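/- If F is a Schwartz SO(3)-invariant function on ℝ³×ℝ³ such that ∫_{ℝ²} F(x,(y₁,y₂,t)) dy₁dy₂ = 0 for all x∈ℝ³ and t∈ℝ, then F = 0. (The Radon-type map R is injective on SO(3)-invariant Schwartz functions.) -/

import Mathlib

open MeasureTheory Complex Matrix

noncomputable section

abbrev V3 := Fin 3 → ℝ
abbrev Mat3 := Matrix (Fin 3) (Fin 3) ℝ

instance : MeasurableSpace Mat3 := (inferInstance : MeasurableSpace (Fin 3 → Fin 3 → ℝ))

/-- The set of special orthogonal 3×3 real matrices. -/
def SO3 : Set Mat3 := {A | A * A.transpose = 1 ∧ A.det = 1}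

/-- `SO(3)`-invariance of a function on `ℝ³ × ℝ³` (simultaneous action on both factors). -/
def Inv3 (F : V3 × V3 → ℂ) : Prop :=
  ∀ k ∈ SO3, ∀ x y : V3, F (k.mulVec x, k.mulVec y) = F (x, y)

/-- The Radon-type map: `RF(x,t) = ∫_{ℝ²} F(x, (y₁, y₂, t)) dy₁ dy₂`. -/
def RadonT (F : (Fin 3 → ℝ) × (Fin 3 → ℝ) → ℂ) (x : Fin 3 → ℝ) (t : ℝ) : ℂ :=
  ∫ w : ℝ × ℝ, F (x, ![w.1, w.2, t])

section Aux

open SchwartzMap FourierTransform RealInnerProductSpace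

abbrev E3 := EuclideanSpace ℝ (Fin 3)

abbrev toE3 (w : Fin 3 → ℝ) : E3 := (WithLp.equiv 2 (Fin 3 → ℝ)).symm w

def L3 : E3 →L[ℝ] V3 × V3 :=
  (ContinuousLinearMap.inr ℝ V3 V3).comp
    (PiLp.continuousLinearEquiv 2 ℝ (fun _ : Fin 3 => ℝ)).toContinuousLinearMap

lemma sup_le_l2 (y : E3) : ‖(WithLp.equiv 2 (Fin 3 → ℝ)) y‖ ≤ ‖y‖ := by
  have h := (PiLp.lipschitzWith_ofLp 2 (fun _ : Fin 3 => ℝ)).dist_le_mul y 0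
  simpa [dist_zero_right] using h

lemma l2_le_sup (y : E3) : ‖y‖ ≤ Real.sqrt 3 * ‖(WithLp.equiv 2 (Fin 3 → ℝ)) y‖ := by
  rw [EuclideanSpace.norm_eq]
  have hs : ∀ i, ‖y i‖ ≤ ‖(WithLp.equiv 2 (Fin 3 → ℝ)) y‖ := fun i => norm_le_pi_norm _ i
  set s := ‖(WithLp.equiv 2 (Fin 3 → ℝ)) y‖ with hsdef
  have h0 : 0 ≤ s := norm_nonneg _
  have hsum : (∑ i, ‖y i‖ ^ 2) ≤ 3 * s ^ 2 := by
    rw [Fin.sum_univ_three]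
    nlinarith [hs 0, hs 1, hs 2, norm_nonneg (y 0), norm_nonneg (y 1), norm_nonneg (y 2)]
  calc Real.sqrt (∑ i, ‖y i‖ ^ 2) ≤ Real.sqrt (3 * s ^ 2) := Real.sqrt_le_sqrt hsum
    _ = Real.sqrt 3 * s := by rw [Real.sqrt_mul (by norm_num), Real.sqrt_sq h0]

lemma gtemp (x : V3) : Function.HasTemperateGrowth (fun y : E3 => ((x, y) : V3 × V3)) := by
  have h : (fun y : E3 => ((x, y) : V3 × V3)) = fun y => ((x, 0) : V3 × V3) + L3 y := by
    funext y
    simp only [L3, ContinuousLinearMap.comp_apply, ContinuousLinearMap.inr_apply, Prod.mk_add_mk,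
      add_zero, zero_add, ContinuousLinearEquiv.coe_coe]
    rfl
  rw [h]
  refine Function.HasTemperateGrowth.of_fderiv ?_ ?_ (k := 1) (C := ‖x‖ + 1) ?_
  · have h2 : (fderiv ℝ fun y : E3 => ((x, 0) : V3 × V3) + L3 y) = fun _ => L3 := by
      funext y
      rw [fderiv_const_add]
      exact L3.fderiv
    rw [h2]
    exact Function.HasTemperateGrowth.const _
  · exact (differentiable_const _).add L3.differentiable
  · intro y
    have h1 : ‖((x,0) : V3 × V3) + L3 y‖ ≤ ‖((x,0) : V3 × V3)‖ + ‖L3 y‖ := norm_add_le _ _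
    have h2 : ‖((x,0) : V3 × V3)‖ = ‖x‖ := by simp [Prod.norm_def]
    have h3 : ‖L3 y‖ ≤ ‖y‖ := by
      have he : ‖L3 y‖ = ‖(WithLp.equiv 2 (Fin 3 → ℝ)) y‖ := by simp [L3, Prod.norm_def]; rfl
      rw [he]; exact sup_le_l2 y
    nlinarith [norm_nonneg x, norm_nonneg y]

/-- Restriction of a Schwartz function on `V3 × V3` to a slice `{x} × V3`, viewed as a
Schwartz function on Euclidean space. -/
def sliceS (x : V3) : 𝓢(V3 × V3, ℂ) →L[ℝ] 𝓢(E3, ℂ) :=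
  SchwartzMap.compCLM ℝ (gtemp x)
    ⟨1, Real.sqrt 3 + 1, fun y => by
      have h1 := l2_le_sup y
      have h2 : ‖(WithLp.equiv 2 (Fin 3 → ℝ)) y‖ ≤ ‖((x, y) : V3 × V3)‖ := by
        simp only [Prod.norm_def]
        exact le_max_right _ _
      have h3 : (0:ℝ) ≤ Real.sqrt 3 := Real.sqrt_nonneg 3
      have h4 := norm_nonneg ((x, y) : V3 × V3)
      have h5 : (0:ℝ) ≤ ‖(WithLp.equiv 2 (Fin 3 → ℝ)) y‖ := norm_nonneg _
      nlinarith⟩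

lemma exists_rot (w : Fin 3 → ℝ) : ∃ k ∈ SO3, ∃ r : ℝ, w = k.mulVec ![0, 0, r] := by
  rcases eq_or_ne w 0 with hw | hw
  · refine ⟨1, ⟨by simp [SO3], by simp [SO3]⟩, 0, ?_⟩
    subst hw
    funext i
    simp [Matrix.one_mulVec]
    fin_cases i <;> rfl
  · set r : ℝ := ‖toE3 w‖ with hr
    have hw' : toE3 w ≠ 0 := by simpa [toE3] using hw
    have hrpos : 0 < r := by rw [hr]; exact norm_pos_iff.mpr hw'
    set u : E3 := r⁻¹ • toE3 w with hu
    have hun : ‖u‖ = 1 := by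
      rw [hu, norm_smul, norm_inv, Real.norm_eq_abs, abs_of_pos hrpos, ← hr,
        inv_mul_cancel₀ hrpos.ne']
    have horth : Orthonormal ℝ (Set.restrict {(2 : Fin 3)} (fun _ : Fin 3 => u)) := by
      constructor
      · intro i; exact hun
      · intro i j hij
        exact absurd (Subtype.ext (by
          have hi := i.2; have hj := j.2
          simp only [Set.mem_singleton_iff] at hi hj
          rw [hi, hj])) hij
    obtain ⟨b, hb⟩ := horth.exists_orthonormalBasis_extension_of_card_eq (by simp)
    have hb2 : b 2 = u := hb 2 rfl
    set k₀ : Mat3 := Matrix.of (fun i j => b j i) with hk₀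
    have hortho : k₀.transpose * k₀ = 1 := by
      ext i j
      have hinner := orthonormal_iff_ite.mp b.orthonormal i j
      simp only [Matrix.mul_apply, Matrix.transpose_apply, Matrix.one_apply, hk₀, Matrix.of_apply]
      rw [PiLp.inner_apply] at hinner
      simp only [RCLike.inner_apply, conj_trivial] at hinner
      rw [← hinner]
      exact Finset.sum_congr rfl (fun _ _ => mul_comm _ _)
    have hortho' : k₀ * k₀.transpose = 1 := mul_eq_one_comm.mp hortho
    have hdet2 : k₀.det * k₀.det = 1 := by
      have h := congrArg Matrix.det hortho
      rwa [Matrix.det_mul, Matrix.det_transpose, Matrix.det_one] at h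
    have hcol : ∀ i, k₀ i 2 = r⁻¹ * w i := fun i => by
      rw [hk₀]
      show b 2 i = r⁻¹ * w i
      rw [hb2, hu]
      rfl
    have hmv : ∀ (k : Mat3), (∀ i, k i 2 = r⁻¹ * w i) → k.mulVec ![0,0,r] = w := by
      intro k hk
      funext i
      simp only [Matrix.mulVec, dotProduct, Fin.sum_univ_three]
      simp [hk i]
      field_simp
    rcases mul_self_eq_one_iff.mp hdet2 with hdet | hdet
    · exact ⟨k₀, ⟨hortho', hdet⟩, r, (hmv k₀ hcol).symm⟩
    · set D : Mat3 := Matrix.diagonal ![-1, 1, 1] with hD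
      have hDD : D * D = 1 := by
        rw [hD, Matrix.diagonal_mul_diagonal]
        convert Matrix.diagonal_one using 2
        funext i; fin_cases i <;> norm_num
      have hDt : D.transpose = D := Matrix.diagonal_transpose _
      have hDdet : D.det = -1 := by
        rw [hD, Matrix.det_diagonal, Fin.prod_univ_three]
        norm_num
        rfl
      refine ⟨k₀ * D, ⟨?_, ?_⟩, r, ?_⟩
      · rw [Matrix.transpose_mul, hDt, Matrix.mul_assoc, ← Matrix.mul_assoc D, hDD, Matrix.one_mul,
          hortho']
      · rw [Matrix.det_mul, hdet, hDdet]; norm_num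
      · refine (hmv (k₀ * D) (fun i => ?_)).symm
        rw [Matrix.mul_apply, Fin.sum_univ_three]
        simp [hD, Matrix.diagonal]
        exact hcol i

lemma rot_integral (k : Mat3) (hk : k ∈ SO3) (f : (Fin 3 → ℝ) → ℂ) :
    ∫ v : Fin 3 → ℝ, f v = ∫ v : Fin 3 → ℝ, f (k.mulVec v) := by
  have hdet : k.det = 1 := hk.2
  have hdet0 : k.det ≠ 0 := by rw [hdet]; norm_num
  have hmap : Measure.map (Matrix.toLin' k) volume = volume := by
    rw [Real.map_matrix_volume_pi_eq_smul_volume_pi hdet0, hdet]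
    simp
  have hinv : Invertible k := invertibleOfRightInverse k _ hk.1
  let e : (Fin 3 → ℝ) ≃ₗ[ℝ] (Fin 3 → ℝ) := Matrix.toLinearEquiv' k hinv
  let ec : (Fin 3 → ℝ) ≃L[ℝ] (Fin 3 → ℝ) := e.toContinuousLinearEquiv
  have hmp : MeasurePreserving (ec.toHomeomorph.toMeasurableEquiv) volume volume := by
    refine ⟨(ec.toHomeomorph.toMeasurableEquiv).measurable, ?_⟩
    have h2 : (ec.toHomeomorph.toMeasurableEquiv : (Fin 3 → ℝ) → (Fin 3 → ℝ))
        = Matrix.toLin' k := rfl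
    rw [h2] at *
    exact hmap
  have h3 := hmp.integral_comp' (f := ec.toHomeomorph.toMeasurableEquiv) f
  rw [← h3]
  rfl

/-- Transfer of integrals between `E3` and the pi type. -/
lemma integral_E3 (f : (Fin 3 → ℝ) → ℂ) :
    ∫ y : E3, f y = ∫ y : Fin 3 → ℝ, f y :=
  (EuclideanSpace.volume_preserving_symm_measurableEquiv_toLp (Fin 3)).integral_comp' f

variable (F : 𝓢(V3 × V3, ℂ))

lemma slice_integrable (x : V3) : Integrable (fun v : Fin 3 → ℝ => F (x, v)) volume := by
  have h := (sliceS x F).integrable (μ := volume)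
  have hemb := (EuclideanSpace.volume_preserving_symm_measurableEquiv_toLp (Fin 3))
  exact (hemb.integrable_comp_emb (MeasurableEquiv.toLp 2 (Fin 3 → ℝ)).symm.measurableEmbedding).mp h

lemma fourier_slice (x : V3) (w : Fin 3 → ℝ) :
    𝓕 (fun y : E3 => F (x, y)) (toE3 w) = ∫ v : Fin 3 → ℝ, 𝐞 (-(v ⬝ᵥ w)) • F (x, v) := by
  rw [Real.fourier_eq]
  have h1 : (fun v : E3 => 𝐞 (-⟪v, toE3 w⟫) • F (x, v))
      = fun v : E3 => 𝐞 (-((fun v' : Fin 3 → ℝ => v' ⬝ᵥ w) v)) • F (x, v) := by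
    funext v
    have h2 : (inner ℝ v (toE3 w) : ℝ) = (fun v' : Fin 3 → ℝ => v' ⬝ᵥ w) v := by
      rw [PiLp.inner_apply]
      simp only [RCLike.inner_apply, conj_trivial]
      exact Finset.sum_congr rfl (fun _ _ => mul_comm _ _)
    rw [h2]
  rw [h1]
  exact integral_E3 (fun v => 𝐞 (-(v ⬝ᵥ w)) • F (x, v))

lemma fourier_rot (hF : Inv3 ⇑F) (k : Mat3) (hk : k ∈ SO3) (x : V3) (w : Fin 3 → ℝ) :
    𝓕 (fun y : E3 => F (x, y)) (toE3 w)
      = 𝓕 (fun y : E3 => F (k.transpose.mulVec x, y)) (toE3 (k.transpose.mulVec w)) := by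
  rw [fourier_slice, fourier_slice]
  have hkk : k.transpose * k = 1 := mul_eq_one_comm.mp hk.1
  rw [rot_integral k hk (fun v => 𝐞 (-(v ⬝ᵥ w)) • F (x, v))]
  congr 1
  funext v
  have hdot : k.mulVec v ⬝ᵥ w = v ⬝ᵥ k.transpose.mulVec w := by
    rw [Matrix.mulVec_transpose, dotProduct_comm (k.mulVec v) w,
      Matrix.dotProduct_mulVec, dotProduct_comm]
  have hFv : F (x, k.mulVec v) = F (k.transpose.mulVec x, v) := by
    have := hF k hk (k.transpose.mulVec x) v
    rwa [Matrix.mulVec_mulVec, hk.1, Matrix.one_mulVec] at this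
  rw [hdot, hFv]

lemma insertNth_two (t : ℝ) (v : Fin 2 → ℝ) :
    Fin.insertNth (2 : Fin 3) t v = ![v 0, v 1, t] := by
  have h : (2 : Fin 3) = Fin.last 2 := rfl
  rw [h, Fin.insertNth_last]
  funext i
  fin_cases i <;> simp [Fin.snoc] <;> rfl

lemma fourier_slice_e3 (hR : ∀ (x : V3) (t : ℝ), RadonT ⇑F x t = 0) (x : V3) (s : ℝ) :
    𝓕 (fun y : E3 => F (x, y)) (toE3 ![0, 0, s]) = 0 := by
  rw [fourier_slice]
  have hdot : ∀ v : Fin 3 → ℝ, v ⬝ᵥ ![0, 0, s] = v 2 * s := by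
    intro v
    simp [dotProduct, Fin.sum_univ_three]
  simp_rw [hdot]
  -- transfer to the product ℝ × (Fin 2 → ℝ)
  have hmp := (measurePreserving_piFinSuccAbove (fun _ : Fin 3 => (volume : Measure ℝ)) 2).symm
  set e := MeasurableEquiv.piFinSuccAbove (fun _ : Fin 3 => ℝ) 2 with he
  have htrans := hmp.integral_comp' (f := e.symm)
    (fun v : Fin 3 → ℝ => 𝐞 (-(v 2 * s)) • F (x, v))
  have main : (∫ v : Fin 3 → ℝ, 𝐞 (-(v 2 * s)) • F (x, v))
      = ∫ p : ℝ × (Fin 2 → ℝ), 𝐞 (-(e.symm p 2 * s)) • F (x, e.symm p)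
        ∂((volume : Measure ℝ).prod (volume : Measure (Fin 2 → ℝ))) := htrans.symm
  rw [main]
  have hsymm : ∀ p : ℝ × (Fin 2 → ℝ), e.symm p = Fin.insertNth 2 p.1 p.2 := fun p => rfl
  -- integrability
  have hint : Integrable (fun v : Fin 3 → ℝ => 𝐞 (-(v 2 * s)) • F (x, v)) volume := by
    refine Integrable.mono' (slice_integrable F x).norm ?_ ?_
    · refine Continuous.aestronglyMeasurable ?_
      refine Continuous.smul ?_ ?_
      · exact continuous_subtype_val.comp ((Real.continuous_fourierChar).comp (f := fun v : Fin 3 → ℝ => -(v 2 * s)) (by fun_prop))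
      · exact F.continuous.comp (by fun_prop)
    · filter_upwards with v
      rw [Circle.norm_smul]
  have hint2 : Integrable (fun p : ℝ × (Fin 2 → ℝ) => 𝐞 (-(e.symm p 2 * s)) • F (x, e.symm p))
      ((volume : Measure ℝ).prod (volume : Measure (Fin 2 → ℝ))) := by
    exact (hmp.integrable_comp_emb e.symm.measurableEmbedding).mpr hint
  rw [MeasureTheory.integral_prod _ hint2]
  have hinner : ∀ t : ℝ, (∫ v : Fin 2 → ℝ, 𝐞 (-(e.symm (t, v) 2 * s)) • F (x, e.symm (t, v))) = 0 := by
    intro t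
    have h2 : ∀ v : Fin 2 → ℝ, e.symm (t, v) 2 = t := fun v => by
      rw [hsymm (t, v)]
      exact Fin.insertNth_apply_same _ _ _
    have h3 : ∀ v : Fin 2 → ℝ, e.symm (t, v) = ![v 0, v 1, t] := by
      intro v
      rw [hsymm (t, v)]
      exact insertNth_two t v
    simp_rw [h2, h3, Circle.smul_def, smul_eq_mul]
    rw [MeasureTheory.integral_const_mul]
    have hrt : (∫ v : Fin 2 → ℝ, F (x, ![v 0, v 1, t])) = RadonT ⇑F x t := by
      rw [RadonT]
      have hmpF := (volume_preserving_finTwoArrow ℝ).symm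
      have h4 := hmpF.integral_comp' (f := (MeasurableEquiv.finTwoArrow (α := ℝ)).symm)
        (fun v : Fin 2 → ℝ => F (x, ![v 0, v 1, t]))
      rw [← h4]
      congr 1
    rw [hrt, hR x t, mul_zero]
  simp_rw [hinner]
  simp

lemma statement9_aux (F : SchwartzMap (V3 × V3) ℂ) (hF : Inv3 ⇑F)
    (hR : ∀ (x : V3) (t : ℝ), RadonT ⇑F x t = 0) :
    F = 0 := by
  have key : ∀ x : V3, ∀ y : E3, F (x, y) = 0 := by
    intro x
    have hfour : ∀ w : E3, 𝓕 (fun y : E3 => F (x, y)) w = 0 := by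
      intro w
      obtain ⟨k, hk, r, hw⟩ := exists_rot ((WithLp.equiv 2 (Fin 3 → ℝ)) w)
      have hw' : w = toE3 ((WithLp.equiv 2 (Fin 3 → ℝ)) w) := rfl
      rw [hw', hw]
      rw [fourier_rot F hF k hk x (k.mulVec ![0, 0, r])]
      have hkt : k.transpose.mulVec (k.mulVec ![0, 0, r]) = ![0, 0, r] := by
        rw [Matrix.mulVec_mulVec, mul_eq_one_comm.mp hk.1, Matrix.one_mulVec]
      rw [hkt]
      exact fourier_slice_e3 F hR _ r
    have hslice0 : sliceS x F = 0 := by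
      have hCLE : FourierTransform.fourierCLE ℝ 𝓢(E3, ℂ) (sliceS x F) = 0 := by
        ext y
        rw [FourierTransform.fourierCLE_apply, SchwartzMap.fourier_coe]
        exact hfour y
      have := congrArg (FourierTransform.fourierCLE ℝ 𝓢(E3, ℂ)).symm hCLE
      rwa [ContinuousLinearEquiv.symm_apply_apply, map_zero] at this
    intro y
    have : sliceS x F y = 0 := by rw [hslice0]; rfl
    exact this
  ext p
  have := key p.1 ((WithLp.equiv 2 (Fin 3 → ℝ)).symm p.2)
  simpa using this

end Aux

/-- The Radon-type map `R` is injective on `SO(3)`-invariant Schwartz functions. -/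
theorem statement9 (F : SchwartzMap (V3 × V3) ℂ) (hF : Inv3 ⇑F)
    (hR : ∀ (x : V3) (t : ℝ), RadonT ⇑F x t = 0) :
    F = 0 :=
  statement9_aux F hF hR
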